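/- Let k be a positive integer and let z, p ∈ M_k(ℂ), where p is an orthogonal projection (p = p* = p²) and zz* ≤ ‖z*z‖·p and z*z ≤ ‖z*z‖·p in the Loewner order (i.e. ‖z*z‖p − zz* and ‖z*z‖p − z*z are positive semidefinite). Let e be the orthogonal projection onto the column space of z*z. Then there exists y ∈ M_k(ℂ) satisfying y y* = y* y = p and |y − z|₂ ≤ |p − z*z|₂ + |p − e|₂ ≤ 2·|p − z*z|₂. -/

import Mathlib

open Matrix
open scoped ComplexOrder

/-- The normalized trace `tr_k` on `M_k(ℂ)`. -/
noncomputable def trN {k : ℕ} (x : Matrix (Fin k) (Fin k) ℂ) : ℂ :=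
  x.trace / (k : ℂ)

/-- The operator norm on `M_k(ℂ)` (acting on Euclidean space). -/
noncomputable def opN {k : ℕ} (x : Matrix (Fin k) (Fin k) ℂ) : ℝ :=
  ‖Matrix.toEuclideanCLM (𝕜 := ℂ) x‖

/-- The normalized Hilbert–Schmidt norm `|z|₂ = (tr_k(z*z))^{1/2}`. -/
noncomputable def hsN {k : ℕ} (x : Matrix (Fin k) (Fin k) ℂ) : ℝ :=
  Real.sqrt (trN (star x * x)).re

namespace Stmt8

variable {k : ℕ}

/-- Extensionality via `mulVec`. -/
lemma mat_ext {A B : Matrix (Fin k) (Fin k) ℂ} (h : ∀ v, A *ᵥ v = B *ᵥ v) : A = B := by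
  ext i j
  have := congrFun (h (Pi.single j 1)) i
  simpa [Matrix.mulVec_single] using this

/-- If the range of `A` is contained in the range of idempotent `e`, then `e * A = A`. -/
lemma mul_eq_self_of_range_le {e A : Matrix (Fin k) (Fin k) ℂ} (he : e * e = e)
    (h : LinearMap.range A.mulVecLin ≤ LinearMap.range e.mulVecLin) : e * A = A := by
  apply mat_ext
  intro v
  obtain ⟨w, hw⟩ := h ⟨v, rfl⟩
  have : e *ᵥ (e *ᵥ w) = e *ᵥ w := by
    rw [Matrix.mulVec_mulVec, he]
  simp only [Matrix.mulVecLin_apply] at hw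
  rw [← Matrix.mulVec_mulVec, ← hw]
  exact this

/-- Hermitian idempotents with the same range are equal. -/
lemma proj_eq_of_range_eq {e e' : Matrix (Fin k) (Fin k) ℂ}
    (hs : eᴴ = e) (hi : e * e = e) (hs' : e'ᴴ = e') (hi' : e' * e' = e')
    (hr : LinearMap.range e.mulVecLin = LinearMap.range e'.mulVecLin) : e = e' := by
  have h1 : e * e' = e' := mul_eq_self_of_range_le hi (le_of_eq hr.symm)
  have h2 : e' * e = e := mul_eq_self_of_range_le hi' (le_of_eq hr)
  calc e = (e' * e)ᴴ := by rw [h2, hs]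
  _ = eᴴ * e'ᴴ := by rw [Matrix.conjTranspose_mul]
  _ = e * e' := by rw [hs, hs']
  _ = e' := h1

/-- The absorption lemma: from the Loewner bound `w* w ≤ c P` we get `w P = w`. -/
lemma absorb_of_psd {c : ℝ} {P w : Matrix (Fin k) (Fin k) ℂ}
    (_hPs : Pᴴ = P) (hP2 : P * P = P)
    (hpsd : (c • P - wᴴ * w).PosSemidef) : w * P = w := by
  have key : ∀ v : Fin k → ℂ, w *ᵥ (v - P *ᵥ v) = 0 := by
    intro v
    set x := v - P *ᵥ v with hx
    have hPx : P *ᵥ x = 0 := by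
      simp only [hx, Matrix.mulVec_sub, Matrix.mulVec_mulVec, hP2, sub_self]
    have h0 := hpsd.dotProduct_mulVec_nonneg x
    have hexp : dotProduct (star x) ((c • P - wᴴ * w) *ᵥ x)
        = - dotProduct (star (w *ᵥ x)) (w *ᵥ x) := by
      rw [Matrix.sub_mulVec]
      rw [dotProduct_sub]
      rw [Matrix.smul_mulVec, hPx]
      rw [← Matrix.mulVec_mulVec]
      rw [Matrix.dotProduct_mulVec, ← Matrix.star_mulVec]
      simp
    rw [hexp] at h0
    have h0' : dotProduct (star (w *ᵥ x)) (w *ᵥ x) ≤ 0 := neg_nonneg.mp h0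
    have h1 : dotProduct (star (w *ᵥ x)) (w *ᵥ x) = 0 :=
      le_antisymm h0' (dotProduct_star_self_nonneg _)
    exact dotProduct_star_self_eq_zero.mp h1
  apply mat_ext
  intro v
  have := key v
  rw [Matrix.mulVec_sub, Matrix.mulVec_mulVec, sub_eq_zero] at this
  exact this.symm

noncomputable def toE (x : Matrix (Fin k) (Fin k) ℂ) : EuclideanSpace ℂ (Fin k × Fin k) :=
  (WithLp.equiv 2 _).symm (fun p => x p.1 p.2)

lemma toE_add (x y : Matrix (Fin k) (Fin k) ℂ) : toE (x + y) = toE x + toE y := rfl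

lemma trace_star_mul_self_re (x : Matrix (Fin k) (Fin k) ℂ) :
    (Matrix.trace (xᴴ * x)).re = ‖toE x‖ ^ 2 := by
  have h1 : ‖toE x‖ = Real.sqrt (∑ p : Fin k × Fin k, ‖x p.1 p.2‖ ^ 2) := by
    rw [EuclideanSpace.norm_eq]
    rfl
  have h2 : (0:ℝ) ≤ ∑ p : Fin k × Fin k, ‖x p.1 p.2‖ ^ 2 :=
    Finset.sum_nonneg fun _ _ => sq_nonneg _
  rw [h1, Real.sq_sqrt h2]
  have swap : (∑ p : Fin k × Fin k, ‖x p.1 p.2‖ ^ 2) = ∑ p : Fin k × Fin k, ‖x p.2 p.1‖ ^ 2 := by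
    rw [Fintype.sum_prod_type, Fintype.sum_prod_type]
    exact Finset.sum_comm
  rw [swap, Matrix.trace]
  simp only [Matrix.diag_apply, Matrix.mul_apply, Matrix.conjTranspose_apply]
  rw [← Fintype.sum_prod_type', Complex.re_sum]
  apply Finset.sum_congr rfl
  intro p _
  rw [show star (x p.2 p.1) * x p.2 p.1 = ((Complex.normSq (x p.2 p.1) : ℝ) : ℂ) by
    rw [Complex.star_def, mul_comm, Complex.mul_conj]]
  rw [Complex.ofReal_re, ← Complex.sq_norm]

lemma trN_star_re (hk : 0 < k) (x : Matrix (Fin k) (Fin k) ℂ) :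
    (trN (xᴴ * x)).re = (‖toE x‖ ^ 2) / k := by
  rw [trN]
  have : ((k:ℂ)) = ((k:ℝ):ℂ) := by push_cast; ring
  rw [this, Complex.div_ofReal_re, trace_star_mul_self_re]

lemma hsN_eq (hk : 0 < k) (x : Matrix (Fin k) (Fin k) ℂ) :
    hsN x = ‖toE x‖ / Real.sqrt k := by
  rw [hsN, show star x = xᴴ from rfl, trN_star_re hk, Real.sqrt_div (sq_nonneg _),
    Real.sqrt_sq (norm_nonneg _)]

lemma hsN_add_le (hk : 0 < k) (x y : Matrix (Fin k) (Fin k) ℂ) :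
    hsN (x + y) ≤ hsN x + hsN y := by
  rw [hsN_eq hk, hsN_eq hk, hsN_eq hk, toE_add, ← add_div]
  have hs : (0:ℝ) < Real.sqrt k := Real.sqrt_pos.mpr (by exact_mod_cast hk)
  exact div_le_div_of_nonneg_right (norm_add_le _ _) hs.le

lemma hsN_def' (x : Matrix (Fin k) (Fin k) ℂ) :
    hsN x = Real.sqrt ((Matrix.trace (xᴴ * x)).re / k) := by
  rw [hsN, show star x = xᴴ from rfl, trN]
  have : ((k:ℂ)) = ((k:ℝ):ℂ) := by push_cast; ring
  rw [this, Complex.div_ofReal_re]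

lemma trace_star_self_re_nonneg (x : Matrix (Fin k) (Fin k) ℂ) :
    0 ≤ (Matrix.trace (xᴴ * x)).re := by
  rw [trace_star_mul_self_re]; positivity

lemma hsN_mono {a b : Matrix (Fin k) (Fin k) ℂ}
    (h : (Matrix.trace (aᴴ * a)).re ≤ (Matrix.trace (bᴴ * b)).re) : hsN a ≤ hsN b := by
  rw [hsN_def', hsN_def']
  apply Real.sqrt_le_sqrt
  exact div_le_div_of_nonneg_right h (Nat.cast_nonneg k) |>.trans_eq rfl

/-- Generic sandwich multiplication. -/
lemma sand_mul {V W X A B : Matrix (Fin k) (Fin k) ℂ} (hW : Wᴴ * W = 1) :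
    (V * A * Wᴴ) * (W * B * X) = V * (A * B) * X := by
  have h : Wᴴ * (W * (B * X)) = B * X := by rw [← Matrix.mul_assoc, hW, Matrix.one_mul]
  simp only [Matrix.mul_assoc, h]

/-- Conjugation of a diagonal matrix by `U`. -/
noncomputable def conjD (U : Matrix (Fin k) (Fin k) ℂ) (d : Fin k → ℂ) :
    Matrix (Fin k) (Fin k) ℂ :=
  U * Matrix.diagonal d * Uᴴ

lemma conjD_def (U : Matrix (Fin k) (Fin k) ℂ) (d : Fin k → ℂ) :
    conjD U d = U * Matrix.diagonal d * Uᴴ := rfl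

lemma conjD_mul {U : Matrix (Fin k) (Fin k) ℂ} (hU : Uᴴ * U = 1) (d d' : Fin k → ℂ) :
    conjD U d * conjD U d' = conjD U (d * d') := by
  unfold conjD
  rw [sand_mul hU, Matrix.diagonal_mul_diagonal]
  rfl

lemma conjD_star (U : Matrix (Fin k) (Fin k) ℂ) (d : Fin k → ℂ) :
    (conjD U d)ᴴ = conjD U (star d) := by
  unfold conjD
  rw [Matrix.conjTranspose_mul, Matrix.conjTranspose_mul, Matrix.conjTranspose_conjTranspose,
    Matrix.diagonal_conjTranspose]
  simp only [Matrix.mul_assoc]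

lemma conjD_add (U : Matrix (Fin k) (Fin k) ℂ) (d d' : Fin k → ℂ) :
    conjD U d + conjD U d' = conjD U (d + d') := by
  unfold conjD
  rw [show Matrix.diagonal (d + d') = Matrix.diagonal d + Matrix.diagonal d' from
    (Matrix.diagonal_add d d').symm, Matrix.mul_add, Matrix.add_mul]

lemma conjD_sub (U : Matrix (Fin k) (Fin k) ℂ) (d d' : Fin k → ℂ) :
    conjD U d - conjD U d' = conjD U (d - d') := by
  unfold conjD
  rw [show Matrix.diagonal (d - d') = Matrix.diagonal d - Matrix.diagonal d' from
    (Matrix.diagonal_sub d d').symm, Matrix.mul_sub, Matrix.sub_mul]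

lemma conjD_trace {U : Matrix (Fin k) (Fin k) ℂ} (hU : Uᴴ * U = 1) (d : Fin k → ℂ) :
    Matrix.trace (conjD U d) = ∑ i, d i := by
  unfold conjD
  rw [Matrix.trace_mul_comm, ← Matrix.mul_assoc, hU, Matrix.one_mul, Matrix.trace_diagonal]

lemma conjD_inj {U : Matrix (Fin k) (Fin k) ℂ} (hU : Uᴴ * U = 1) {d d' : Fin k → ℂ}
    (h : conjD U d = conjD U d') : d = d' := by
  have key : ∀ c : Fin k → ℂ, Uᴴ * conjD U c * U = Matrix.diagonal c := by
    intro c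
    unfold conjD
    calc Uᴴ * (U * Matrix.diagonal c * Uᴴ) * U
        = (Uᴴ * U) * Matrix.diagonal c * (Uᴴ * U) := by
          simp only [Matrix.mul_assoc]
      _ = Matrix.diagonal c := by rw [hU]; simp
  have : Matrix.diagonal d = Matrix.diagonal d' := by
    rw [← key d, ← key d', h]
  funext i
  have h2 := Matrix.ext_iff.mpr this i i
  simpa [Matrix.diagonal_apply_eq] using h2

noncomputable def permM (σ : Equiv.Perm (Fin k)) (μ : Fin k → ℝ) : Matrix (Fin k) (Fin k) ℂ :=
  Matrix.of fun i j => if σ j = i then (μ j : ℂ) else 0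

lemma permM_star_mul (σ : Equiv.Perm (Fin k)) (μ : Fin k → ℝ) (hμ : ∀ i, μ i = 0 ∨ μ i = 1) :
    (permM σ μ)ᴴ * permM σ μ = Matrix.diagonal (fun i => (μ i : ℂ)) := by
  ext a b
  rw [Matrix.mul_apply, Finset.sum_eq_single (σ a)]
  · simp only [permM, Matrix.of_apply, Matrix.conjTranspose_apply, if_pos rfl,
      RCLike.star_def, apply_ite (starRingEnd ℂ), map_zero, Complex.conj_ofReal,
      Equiv.apply_eq_iff_eq]
    by_cases hab : b = a
    · subst hab
      rw [if_pos rfl, Matrix.diagonal_apply_eq]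
      rcases hμ b with h | h <;> rw [h] <;> norm_num
    · rw [if_neg hab, mul_zero, Matrix.diagonal_apply_ne' _ hab]
  · intro x _ hx
    have : ¬ (σ a = x) := fun h => hx h.symm
    simp only [permM, Matrix.of_apply, Matrix.conjTranspose_apply, if_neg this, star_zero,
      zero_mul]
  · intro hx
    exact absurd (Finset.mem_univ _) hx

lemma permM_mul_star (σ : Equiv.Perm (Fin k)) (μ ν : Fin k → ℝ)
    (hμ : ∀ i, μ i = 0 ∨ μ i = 1) (hσ : ∀ j, ν (σ j) = μ j) :
    permM σ μ * (permM σ μ)ᴴ = Matrix.diagonal (fun i => (ν i : ℂ)) := by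
  ext a b
  rw [Matrix.mul_apply, Finset.sum_eq_single (σ.symm a)]
  · simp only [permM, Matrix.of_apply, Matrix.conjTranspose_apply, Equiv.apply_symm_apply,
      if_pos rfl, RCLike.star_def, apply_ite (starRingEnd ℂ), map_zero, Complex.conj_ofReal]
    have hv := hσ (σ.symm a)
    rw [Equiv.apply_symm_apply] at hv
    by_cases hab : a = b
    · subst hab
      simp only [if_pos rfl, Matrix.diagonal_apply_eq]
      rw [hv]
      rcases hμ (σ.symm a) with h | h <;> rw [h] <;> norm_num
    · rw [if_neg hab, mul_zero, Matrix.diagonal_apply_ne _ hab]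
  · intro x _ hx
    have : ¬ (σ x = a) := by
      rw [Equiv.apply_eq_iff_eq_symm_apply]
      exact hx
    simp only [permM, Matrix.of_apply, if_neg this, zero_mul]
  · intro hx
    exact absurd (Finset.mem_univ _) hx

lemma permM_mul_diag (σ : Equiv.Perm (Fin k)) (μ : Fin k → ℝ) (hμ : ∀ i, μ i = 0 ∨ μ i = 1) :
    permM σ μ * Matrix.diagonal (fun i => (μ i : ℂ)) = permM σ μ := by
  ext a b
  rw [Matrix.mul_diagonal]
  simp only [permM, Matrix.of_apply, ite_mul, zero_mul]
  rcases hμ b with h | h <;> rw [h] <;> norm_num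

lemma diag_mul_permM (σ : Equiv.Perm (Fin k)) (μ ν : Fin k → ℝ)
    (hμ : ∀ i, μ i = 0 ∨ μ i = 1) (hσ : ∀ j, ν (σ j) = μ j) :
    Matrix.diagonal (fun i => (ν i : ℂ)) * permM σ μ = permM σ μ := by
  ext a b
  rw [Matrix.diagonal_mul]
  simp only [permM, Matrix.of_apply, mul_ite, mul_zero]
  by_cases hc : σ b = a
  · rw [if_pos hc, if_pos hc, ← hc, hσ b]
    rcases hμ b with h | h <;> rw [h] <;> norm_num
  · rw [if_neg hc, if_neg hc]

lemma exists_perm (μ ν : Fin k → ℝ) (hμ : ∀ i, μ i = 0 ∨ μ i = 1)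
    (hν : ∀ i, ν i = 0 ∨ ν i = 1) (hc : ∑ i, μ i = ∑ i, ν i) :
    ∃ σ : Equiv.Perm (Fin k), ∀ j, ν (σ j) = μ j := by
  classical
  have hsum : ∀ (ρ : Fin k → ℝ), (∀ i, ρ i = 0 ∨ ρ i = 1) →
      ∑ i, ρ i = ((Finset.univ.filter (fun i => ρ i = 1)).card : ℝ) := by
    intro ρ hρ
    rw [← Finset.sum_boole]
    apply Finset.sum_congr rfl
    intro i _
    rcases hρ i with h | h <;> simp [h]
  have hcard : (Finset.univ.filter (fun i => μ i = 1)).card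
      = (Finset.univ.filter (fun i => ν i = 1)).card := by
    have := hc
    rw [hsum μ hμ, hsum ν hν] at this
    exact_mod_cast this
  have hc1 : Fintype.card {i // μ i = 1} = Fintype.card {i // ν i = 1} := by
    rw [Fintype.card_subtype, Fintype.card_subtype, hcard]
  have hc2 : Fintype.card {i // ¬ μ i = 1} = Fintype.card {i // ¬ ν i = 1} := by
    rw [Fintype.card_subtype_compl, Fintype.card_subtype_compl, hc1]
  let e₁ : {i // μ i = 1} ≃ {i // ν i = 1} := Fintype.equivOfCardEq hc1
  let e₂ : {i // ¬ μ i = 1} ≃ {i // ¬ ν i = 1} := Fintype.equivOfCardEq hc2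
  refine ⟨Equiv.subtypeCongr e₁ e₂, fun j => ?_⟩
  by_cases h : μ j = 1
  · have hσ : Equiv.subtypeCongr e₁ e₂ j = (e₁ ⟨j, h⟩ : Fin k) := by
      simp [Equiv.subtypeCongr, h]
    rw [hσ, (e₁ ⟨j, h⟩).2, h]
  · have hσ : Equiv.subtypeCongr e₁ e₂ j = (e₂ ⟨j, h⟩ : Fin k) := by
      simp [Equiv.subtypeCongr, h]
    have h0 : μ j = 0 := (hμ j).resolve_right h
    have h1 : ν ((e₂ ⟨j, h⟩ : Fin k)) = 0 := (hν _).resolve_right (e₂ ⟨j, h⟩).2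
    rw [hσ, h1, h0]

lemma sqrt_termwise {l : ℝ} (h0 : 0 ≤ l) :
    1 - Real.sqrt l - (Real.sqrt l - l) ≤ (1 - l) * (1 - l) := by
  set t := Real.sqrt l with htdef
  have ht : 0 ≤ t := Real.sqrt_nonneg l
  have hl : l = t * t := (Real.mul_self_sqrt h0).symm
  rw [hl]
  nlinarith [mul_nonneg (mul_nonneg ht (sq_nonneg (t - 1))) (by linarith : (0:ℝ) ≤ t + 2)]

lemma re_sum_cast (r : Fin k → ℝ) : (∑ i, ((r i : ℝ) : ℂ)).re = ∑ i, r i := by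
  rw [Complex.re_sum]
  simp

end Stmt8

open Stmt8 in
/-- Lemma 5.3: if `p` is an orthogonal projection with
`zz* ≤ ‖z*z‖p` and `z*z ≤ ‖z*z‖p` (Loewner order), and `e` is the orthogonal
projection onto the column space of `z*z`, then there is `y` with
`yy* = y*y = p` and `|y − z|₂ ≤ |p − z*z|₂ + |p − e|₂ ≤ 2|p − z*z|₂`. -/
theorem stmt_8 (k : ℕ) (hk : 0 < k) (z P e : Matrix (Fin k) (Fin k) ℂ)
    (hP : star P = P ∧ P * P = P)
    (h1 : (opN (star z * z) • P - z * star z).PosSemidef)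
    (h2 : (opN (star z * z) • P - star z * z).PosSemidef)
    (he : star e = e ∧ e * e = e ∧
      LinearMap.range (Matrix.mulVecLin e) =
        LinearMap.range (Matrix.mulVecLin (star z * z))) :
    ∃ y : Matrix (Fin k) (Fin k) ℂ,
      y * star y = P ∧ star y * y = P ∧
      hsN (y - z) ≤ hsN (P - star z * z) + hsN (P - e) ∧
      hsN (P - star z * z) + hsN (P - e) ≤ 2 * hsN (P - star z * z) := by
  classical
  obtain ⟨hPs, hP2⟩ := hP
  obtain ⟨hes, he2, her⟩ := he
  rw [Matrix.star_eq_conjTranspose] at hPs hes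
  simp only [Matrix.star_eq_conjTranspose] at h1 h2 her ⊢
  -- basic absorption facts
  have zP : z * P = z := absorb_of_psd hPs hP2 h2
  have Pz : P * z = z := by
    have h1' : (opN (zᴴ * z) • P - (zᴴ)ᴴ * zᴴ).PosSemidef := by
      rwa [Matrix.conjTranspose_conjTranspose]
    have := absorb_of_psd hPs hP2 h1'
    have := congrArg Matrix.conjTranspose this
    rwa [Matrix.conjTranspose_mul, Matrix.conjTranspose_conjTranspose, hPs] at this
  have hhP : (zᴴ * z) * P = zᴴ * z := by
    rw [Matrix.mul_assoc, zP]
  have hh : (zᴴ * z).PosSemidef := Matrix.posSemidef_conjTranspose_mul_self z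
  have hH : (zᴴ * z).IsHermitian := hh.1
  have hPh : P * (zᴴ * z) = zᴴ * z := by
    have := congrArg Matrix.conjTranspose hhP
    rwa [Matrix.conjTranspose_mul, hPs, hH.eq] at this
  -- spectral theorem for h = zᴴz
  set lam : Fin k → ℝ := hH.eigenvalues with hlam
  have lam0 : ∀ i, 0 ≤ lam i := hh.eigenvalues_nonneg
  set U : Matrix (Fin k) (Fin k) ℂ := (hH.eigenvectorUnitary : Matrix (Fin k) (Fin k) ℂ)
    with hUdef
  have hU : Uᴴ * U = 1 := by
    have := hH.eigenvectorUnitary.2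
    rw [Matrix.mem_unitaryGroup_iff'] at this
    exact this
  have spec : zᴴ * z = conjD U (fun i => (lam i : ℂ)) := by
    rw [conjD_def]
    exact hH.spectral_theorem
  -- scalar functions
  set gr : Fin k → ℝ := fun i => if lam i = 0 then 0 else (Real.sqrt (lam i))⁻¹ with hgr
  set xv : Fin k → ℝ := fun i => if lam i = 0 then 0 else 1 with hxv
  set gC : Fin k → ℂ := fun i => (gr i : ℂ) with hgC
  set xC : Fin k → ℂ := fun i => (xv i : ℂ) with hxC
  set dC : Fin k → ℂ := fun i => (lam i : ℂ) with hdC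
  set sC : Fin k → ℂ := fun i => (Real.sqrt (lam i) : ℂ) with hsC
  have sqrt_ne : ∀ i, lam i ≠ 0 → Real.sqrt (lam i) ≠ 0 := fun i hi =>
    Real.sqrt_ne_zero'.mpr (lt_of_le_of_ne (lam0 i) (Ne.symm hi))
  have hstep : ∀ i, lam i ≠ 0 → (Real.sqrt (lam i))⁻¹ * lam i = Real.sqrt (lam i) := by
    intro i h
    calc (Real.sqrt (lam i))⁻¹ * lam i
        = (Real.sqrt (lam i))⁻¹ * (Real.sqrt (lam i) * Real.sqrt (lam i)) := by
          rw [Real.mul_self_sqrt (lam0 i)]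
      _ = Real.sqrt (lam i) := by
          rw [← mul_assoc, inv_mul_cancel₀ (sqrt_ne i h), one_mul]
  have p1 : gC * dC = sC := by
    funext i
    simp only [hgC, hgr, hdC, hsC, Pi.mul_apply]
    by_cases h : lam i = 0
    · simp [h]
    · rw [if_neg h, ← Complex.ofReal_mul]
      congr 1
      exact hstep i h
  have p3 : gC * (dC * gC) = xC := by
    funext i
    simp only [hgC, hgr, hdC, hxC, hxv, Pi.mul_apply]
    by_cases h : lam i = 0
    · simp [h]
    · rw [if_neg h, if_neg h, ← Complex.ofReal_mul, ← Complex.ofReal_mul]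
      congr 1
      rw [← mul_assoc, hstep i h, mul_inv_cancel₀ (sqrt_ne i h)]
  have p4 : xC * dC = dC := by
    funext i
    simp only [hxC, hxv, hdC, Pi.mul_apply]
    by_cases h : lam i = 0
    · simp [h]
    · rw [if_neg h]; norm_num
  have p5 : gC * xC = gC := by
    funext i
    simp only [hgC, hgr, hxC, hxv, Pi.mul_apply]
    by_cases h : lam i = 0
    · simp [h]
    · rw [if_neg h, if_neg h]; norm_num
  have p6 : dC * (gC * gC) = xC := by
    funext i
    simp only [hgC, hgr, hdC, hxC, hxv, Pi.mul_apply]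
    by_cases h : lam i = 0
    · simp [h]
    · rw [if_neg h, if_neg h, ← Complex.ofReal_mul, ← Complex.ofReal_mul]
      congr 1
      rw [← mul_assoc, mul_comm (lam i), hstep i h, mul_inv_cancel₀ (sqrt_ne i h)]
  have p8 : xC * xC = xC := by
    funext i
    simp only [hxC, hxv, Pi.mul_apply]
    by_cases h : lam i = 0 <;> simp [h]
  have stargC : star gC = gC := by
    funext i
    simp [hgC, Pi.star_apply, Complex.conj_ofReal]
  have starxC : star xC = xC := by
    funext i
    simp [hxC, Pi.star_apply, Complex.conj_ofReal]
  have starsC : star sC = sC := by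
    funext i
    simp [hsC, Pi.star_apply, Complex.conj_ofReal]
  -- the partial isometry u
  set u : Matrix (Fin k) (Fin k) ℂ := z * conjD U gC with hudef
  have hu_star : uᴴ = conjD U gC * zᴴ := by
    rw [hudef, Matrix.conjTranspose_mul, conjD_star, stargC]
  have mid_collect : ∀ A B : Matrix (Fin k) (Fin k) ℂ,
      (A * zᴴ) * (z * B) = A * ((zᴴ * z) * B) := by
    intro A B
    simp only [Matrix.mul_assoc]
  have huuE : uᴴ * u = conjD U xC := by
    rw [hu_star, hudef, mid_collect, spec, conjD_mul hU, conjD_mul hU, p3]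
  have huz : uᴴ * z = conjD U sC := by
    rw [hu_star, Matrix.mul_assoc, spec, conjD_mul hU, p1]
  have hzu : zᴴ * u = conjD U sC := by
    have := congrArg Matrix.conjTranspose huz
    rwa [Matrix.conjTranspose_mul, Matrix.conjTranspose_conjTranspose, conjD_star, starsC]
      at this
  -- identify e with conjD U xC
  have hEs : (conjD U xC)ᴴ = conjD U xC := by rw [conjD_star, starxC]
  have hE2 : conjD U xC * conjD U xC = conjD U xC := by rw [conjD_mul hU, p8]
  have hEh : conjD U xC * (zᴴ * z) = zᴴ * z := by
    rw [spec, conjD_mul hU, p4]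
  have hE_eq : conjD U xC = (zᴴ * z) * conjD U (gC * gC) := by
    rw [spec, conjD_mul hU, p6]
  have hrange : LinearMap.range (conjD U xC).mulVecLin
      = LinearMap.range (zᴴ * z).mulVecLin := by
    apply le_antisymm
    · rw [hE_eq, Matrix.mulVecLin_mul]
      exact LinearMap.range_comp_le_range _ _
    · conv_lhs => rw [← hEh]
      rw [Matrix.mulVecLin_mul]
      exact LinearMap.range_comp_le_range _ _
  have heE : e = conjD U xC :=
    proj_eq_of_range_eq hes he2 hEs hE2 (her.trans hrange.symm)
  -- projection relations with P
  have Pe : P * e = e := by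
    apply mul_eq_self_of_range_le hP2
    rw [her]
    conv_lhs => rw [← hPh]
    rw [Matrix.mulVecLin_mul]
    exact LinearMap.range_comp_le_range _ _
  have eP : e * P = e := by
    have := congrArg Matrix.conjTranspose Pe
    rwa [Matrix.conjTranspose_mul, hPs, hes] at this
  have Pu : P * u = u := by
    rw [hudef, ← Matrix.mul_assoc, Pz]
  have ue : u * e = u := by
    rw [heE, hudef, Matrix.mul_assoc, conjD_mul hU, p5]
  have uP : u * P = u := by
    calc u * P = u * e * P := by rw [ue]
    _ = u * (e * P) := by rw [Matrix.mul_assoc]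
    _ = u * e := by rw [eP]
    _ = u := ue
  have eh : e * (zᴴ * z) = zᴴ * z := by rw [heE]; exact hEh
  have hhe : (zᴴ * z) * e = zᴴ * z := by
    have := congrArg Matrix.conjTranspose eh
    rwa [Matrix.conjTranspose_mul, hes, hH.eq] at this
  -- the range projection f
  set f : Matrix (Fin k) (Fin k) ℂ := u * uᴴ with hfdef
  have fs : fᴴ = f := by
    rw [hfdef, Matrix.conjTranspose_mul, Matrix.conjTranspose_conjTranspose]
  have huu_e : uᴴ * u = e := by rw [huuE, heE]
  have f2 : f * f = f := by
    calc f * f = u * (uᴴ * u) * uᴴ := by simp only [hfdef, Matrix.mul_assoc]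
    _ = u * e * uᴴ := by rw [huu_e]
    _ = f := by rw [ue, hfdef]
  have Pf : P * f = f := by rw [hfdef, ← Matrix.mul_assoc, Pu]
  have uHP : uᴴ * P = uᴴ := by
    have := congrArg Matrix.conjTranspose Pu
    rwa [Matrix.conjTranspose_mul, hPs] at this
  have fP : f * P = f := by
    rw [hfdef, Matrix.mul_assoc, uHP]
  -- the projections P - e and P - f
  have q1s : (P - e)ᴴ = P - e := by rw [Matrix.conjTranspose_sub, hPs, hes]
  have q2s : (P - f)ᴴ = P - f := by rw [Matrix.conjTranspose_sub, hPs, fs]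
  have q1i : (P - e) * (P - e) = P - e := by
    rw [Matrix.sub_mul, Matrix.mul_sub, Matrix.mul_sub, hP2, Pe, eP, he2]
    abel
  have q2i : (P - f) * (P - f) = P - f := by
    rw [Matrix.sub_mul, Matrix.mul_sub, Matrix.mul_sub, hP2, Pf, fP, f2]
    abel
  have hq1H : (P - e).IsHermitian := q1s
  have hq2H : (P - f).IsHermitian := q2s
  set V₁ : Matrix (Fin k) (Fin k) ℂ := (hq1H.eigenvectorUnitary : Matrix (Fin k) (Fin k) ℂ)
    with hV₁def
  set V₂ : Matrix (Fin k) (Fin k) ℂ := (hq2H.eigenvectorUnitary : Matrix (Fin k) (Fin k) ℂ)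
    with hV₂def
  have hV₁ : V₁ᴴ * V₁ = 1 := by
    have := hq1H.eigenvectorUnitary.2
    rw [Matrix.mem_unitaryGroup_iff'] at this
    exact this
  have hV₂ : V₂ᴴ * V₂ = 1 := by
    have := hq2H.eigenvectorUnitary.2
    rw [Matrix.mem_unitaryGroup_iff'] at this
    exact this
  set mu : Fin k → ℝ := hq1H.eigenvalues with hmu
  set nu : Fin k → ℝ := hq2H.eigenvalues with hnu
  have spec₁ : P - e = conjD V₁ (fun i => (mu i : ℂ)) := by
    rw [conjD_def]
    exact hq1H.spectral_theorem
  have spec₂ : P - f = conjD V₂ (fun i => (nu i : ℂ)) := by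
    rw [conjD_def]
    exact hq2H.spectral_theorem
  have dichC : ∀ (W : Matrix (Fin k) (Fin k) ℂ) (hW : Wᴴ * W = 1) (r : Fin k → ℝ),
      conjD W (fun i => (r i:ℂ)) * conjD W (fun i => (r i:ℂ)) = conjD W (fun i => (r i:ℂ)) →
      ∀ i, r i = 0 ∨ r i = 1 := by
    intro W hW r hidem i
    rw [conjD_mul hW] at hidem
    have := conjD_inj hW hidem
    have hsq : r i * r i = r i := by
      have := congrFun this i
      simp only [Pi.mul_apply, ← Complex.ofReal_mul] at this
      exact_mod_cast this
    have : r i * (r i - 1) = 0 := by linear_combination hsq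
    rcases mul_eq_zero.mp this with h | h
    · exact Or.inl h
    · exact Or.inr (by linarith [sub_eq_zero.mp h])
  have dich₁ : ∀ i, mu i = 0 ∨ mu i = 1 := by
    apply dichC V₁ hV₁ mu
    rw [← spec₁]
    exact q1i
  have dich₂ : ∀ i, nu i = 0 ∨ nu i = 1 := by
    apply dichC V₂ hV₂ nu
    rw [← spec₂]
    exact q2i
  -- equality of traces
  have htrace : ∑ i, mu i = ∑ i, nu i := by
    have t1 : Matrix.trace (P - e) = ∑ i, ((mu i : ℝ) : ℂ) := by
      rw [spec₁, conjD_trace hV₁]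
    have t2 : Matrix.trace (P - f) = ∑ i, ((nu i : ℝ) : ℂ) := by
      rw [spec₂, conjD_trace hV₂]
    have t3 : Matrix.trace (P - e) = Matrix.trace (P - f) := by
      rw [Matrix.trace_sub, Matrix.trace_sub]
      congr 1
      rw [← huu_e, hfdef, Matrix.trace_mul_comm]
    have := t1.symm.trans (t3.trans t2)
    have := congrArg Complex.re this
    rwa [re_sum_cast, re_sum_cast] at this
  obtain ⟨σ, hσ⟩ := exists_perm mu nu dich₁ dich₂ htrace
  -- the partial isometry w
  set M : Matrix (Fin k) (Fin k) ℂ := permM σ mu with hMdef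
  set w : Matrix (Fin k) (Fin k) ℂ := V₂ * M * V₁ᴴ with hwdef
  have hw_star : wᴴ = V₁ * Mᴴ * V₂ᴴ := by
    rw [hwdef]
    simp only [Matrix.conjTranspose_mul, Matrix.conjTranspose_conjTranspose, Matrix.mul_assoc]
  have hww : wᴴ * w = P - e := by
    calc wᴴ * w = V₁ * (Mᴴ * M) * V₁ᴴ := by rw [hw_star, hwdef, sand_mul hV₂]
    _ = V₁ * Matrix.diagonal (fun i => (mu i : ℂ)) * V₁ᴴ := by
        rw [hMdef, permM_star_mul σ mu dich₁]
    _ = P - e := by rw [← conjD_def, ← spec₁]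
  have hwws : w * wᴴ = P - f := by
    calc w * wᴴ = V₂ * (M * Mᴴ) * V₂ᴴ := by rw [hw_star, hwdef, sand_mul hV₁]
    _ = V₂ * Matrix.diagonal (fun i => (nu i : ℂ)) * V₂ᴴ := by
        rw [hMdef, permM_mul_star σ mu nu dich₁ hσ]
    _ = P - f := by rw [← conjD_def, ← spec₂]
  have hwq : w * (P - e) = w := by
    rw [spec₁, conjD_def, hwdef, hMdef, sand_mul hV₁, permM_mul_diag σ mu dich₁]
  have hq2w : (P - f) * w = w := by
    rw [spec₂, conjD_def, hwdef, hMdef, sand_mul hV₂, diag_mul_permM σ mu nu dich₁ hσ]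
  -- cross terms vanish
  have euH : e * uᴴ = uᴴ := by
    have := congrArg Matrix.conjTranspose ue
    rwa [Matrix.conjTranspose_mul, hes] at this
  have uHf : uᴴ * f = uᴴ := by
    rw [hfdef, ← Matrix.mul_assoc, huu_e, euH]
  have uHq2 : uᴴ * (P - f) = 0 := by
    rw [Matrix.mul_sub, uHP, uHf, sub_self]
  have uHw : uᴴ * w = 0 := by
    rw [← hq2w, ← Matrix.mul_assoc, uHq2, Matrix.zero_mul]
  have wHu : wᴴ * u = 0 := by
    have := congrArg Matrix.conjTranspose uHw
    rwa [Matrix.conjTranspose_mul, Matrix.conjTranspose_conjTranspose,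
      Matrix.conjTranspose_zero] at this
  have PuH : P * uᴴ = uᴴ := by
    have := congrArg Matrix.conjTranspose uP
    rwa [Matrix.conjTranspose_mul, hPs] at this
  have q1uH : (P - e) * uᴴ = 0 := by
    rw [Matrix.sub_mul, PuH, euH, sub_self]
  have wuH : w * uᴴ = 0 := by
    rw [← hwq, Matrix.mul_assoc, q1uH, Matrix.mul_zero]
  have uwH : u * wᴴ = 0 := by
    have := congrArg Matrix.conjTranspose wuH
    rwa [Matrix.conjTranspose_mul, Matrix.conjTranspose_conjTranspose,
      Matrix.conjTranspose_zero] at this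
  -- the unitary y
  set y : Matrix (Fin k) (Fin k) ℂ := u + w with hydef
  have hyy : yᴴ * y = P := by
    rw [hydef, Matrix.conjTranspose_add, Matrix.add_mul, Matrix.mul_add, Matrix.mul_add,
      huu_e, uHw, wHu, hww]
    abel
  have hyyT : y * yᴴ = P := by
    rw [hydef, Matrix.conjTranspose_add, Matrix.add_mul, Matrix.mul_add, Matrix.mul_add,
      ← hfdef, uwH, wuH, hwws]
    abel
  -- trace computations
  have hermuz : (u - z)ᴴ * (u - z) = conjD U (xC - sC - (sC - dC)) := by
    rw [Matrix.conjTranspose_sub, Matrix.sub_mul, Matrix.mul_sub, Matrix.mul_sub,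
      huuE, huz, hzu, spec, conjD_sub, conjD_sub, conjD_sub]
  have tr1 : (Matrix.trace ((u - z)ᴴ * (u - z))).re
      = ∑ i, (xv i - Real.sqrt (lam i) - (Real.sqrt (lam i) - lam i)) := by
    rw [hermuz, conjD_trace hU]
    have hterm : ∀ i : Fin k, (xC - sC - (sC - dC)) i
        = ((xv i - Real.sqrt (lam i) - (Real.sqrt (lam i) - lam i) : ℝ) : ℂ) := by
      intro i
      simp only [hxC, hsC, hdC, Pi.sub_apply]
      push_cast
      ring
    rw [Finset.sum_congr rfl (fun i _ => hterm i), re_sum_cast]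
  have hermeh : (e - zᴴ * z)ᴴ * (e - zᴴ * z) = conjD U ((xC - dC) * (xC - dC)) := by
    rw [Matrix.conjTranspose_sub, hes, hH.eq, heE, spec, conjD_sub, conjD_mul hU]
  have tr2 : (Matrix.trace ((e - zᴴ * z)ᴴ * (e - zᴴ * z))).re
      = ∑ i, ((xv i - lam i) * (xv i - lam i)) := by
    rw [hermeh, conjD_trace hU]
    have hterm : ∀ i : Fin k, ((xC - dC) * (xC - dC)) i
        = (((xv i - lam i) * (xv i - lam i) : ℝ) : ℂ) := by
      intro i
      simp only [hxC, hdC, Pi.sub_apply, Pi.mul_apply]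
      push_cast
      ring
    rw [Finset.sum_congr rfl (fun i _ => hterm i), re_sum_cast]
  have termwise : ∀ i : Fin k, xv i - Real.sqrt (lam i) - (Real.sqrt (lam i) - lam i)
      ≤ (xv i - lam i) * (xv i - lam i) := by
    intro i
    by_cases h : lam i = 0
    · simp [hxv, h]
    · have h1 : xv i = 1 := by simp [hxv, h]
      rw [h1]
      exact sqrt_termwise (lam0 i)
  have ineq1 : hsN (u - z) ≤ hsN (e - zᴴ * z) := by
    apply hsN_mono
    rw [tr1, tr2]
    exact Finset.sum_le_sum (fun i _ => termwise i)
  -- orthogonal splitting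
  have idsplit : (P - zᴴ * z) * (P - zᴴ * z)
      = (e - zᴴ * z) * (e - zᴴ * z) + (P - e) * (P - e) := by
    simp only [Matrix.sub_mul, Matrix.mul_sub, hP2, hPh, hhP, he2, eh, hhe, Pe, eP]
    abel
  have hermPh : (P - zᴴ * z)ᴴ = P - zᴴ * z := by
    rw [Matrix.conjTranspose_sub, hPs, hH.eq]
  have hermeh' : (e - zᴴ * z)ᴴ = e - zᴴ * z := by
    rw [Matrix.conjTranspose_sub, hes, hH.eq]
  have hsplit : (Matrix.trace ((P - zᴴ * z)ᴴ * (P - zᴴ * z))).re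
      = (Matrix.trace ((e - zᴴ * z)ᴴ * (e - zᴴ * z))).re
        + (Matrix.trace ((P - e)ᴴ * (P - e))).re := by
    rw [hermPh, hermeh', q1s, idsplit, Matrix.trace_add, Complex.add_re, ← q1s, ← hermeh']
  have ineq2 : hsN (e - zᴴ * z) ≤ hsN (P - zᴴ * z) := by
    apply hsN_mono
    rw [hsplit]
    linarith [trace_star_self_re_nonneg (P - e)]
  have ineq3 : hsN (P - e) ≤ hsN (P - zᴴ * z) := by
    apply hsN_mono
    rw [hsplit]
    linarith [trace_star_self_re_nonneg (e - zᴴ * z)]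
  have hw_hs : hsN w = hsN (P - e) := by
    have hx : wᴴ * w = (P - e)ᴴ * (P - e) := by rw [hww, q1s, q1i]
    simp only [hsN, Matrix.star_eq_conjTranspose, hx]
  have htri : hsN (y - z) ≤ hsN (u - z) + hsN w := by
    have hyz : y - z = (u - z) + w := by rw [hydef]; abel
    rw [hyz]
    exact hsN_add_le hk _ _
  refine ⟨y, hyyT, hyy, ?_, ?_⟩
  · calc hsN (y - z) ≤ hsN (u - z) + hsN w := htri
    _ ≤ hsN (P - zᴴ * z) + hsN (P - e) := by
        rw [hw_hs]
        exact add_le_add (ineq1.trans ineq2) le_rfl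
  · linarith [ineq3]
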